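/- Let (M,ω) be a non-compact symplectic manifold with H¹(M,ℝ)=0 and with exact symplectic form ω. The cohomology class in H²(Diff(M,ω),ℝ) of the 2-cocycle C_{x₀}(g₁,g₂)=∫_{x₀}^{g₂x₀}(g₁*ω₁−ω₁) does not depend on the choice of the base point x₀∈M nor on the choice of the 1-form ω₁ with dω₁=ω; explicitly, for two points x₁,x₂∈M one has C_{x₁}−C_{x₂}=Da, where a is the 1-cochain a(g)=∫_{x₁}^{x₂}(g*ω₁−ω₁). -/
import Mathlib


open scoped BigOperators

namespace SymplCocycle

variable {M V : Type*} [AddCommGroup V] [Module ℝ V]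

abbrev Form (M V : Type*) [AddCommGroup V] [Module ℝ V] (k : ℕ) :=
  M → V [⋀^Fin k]→ₗ[ℝ] ℝ

noncomputable def ofFun (f : M → ℝ) : Form M V 0 :=
  fun x => AlternatingMap.constOfIsEmpty ℝ V (Fin 0) (f x)

noncomputable def wedgeAlt {p q : ℕ} (α : V [⋀^Fin p]→ₗ[ℝ] ℝ) (β : V [⋀^Fin q]→ₗ[ℝ] ℝ) :
    V [⋀^Fin (p + q)]→ₗ[ℝ] ℝ :=
  AlternatingMap.domDomCongr finSumFinEquiv
    ((LinearMap.mul' ℝ ℝ).compAlternatingMap (α.domCoprod β))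

noncomputable def wedge {p q : ℕ} (α : Form M V p) (β : Form M V q) : Form M V (p + q) :=
  fun x => wedgeAlt (α x) (β x)

noncomputable def wpow (ω : Form M V 2) : (n : ℕ) → Form M V (2 * n)
  | 0 => ofFun fun _ => (1 : ℝ)
  | n + 1 => wedge (wpow ω n) ω

def castF {k l : ℕ} (h : k = l) (α : Form M V k) : Form M V l := h ▸ α

noncomputable def iprod (ω : Form M V 2) (X : M → V) : Form M V 1 :=
  fun x => (ω x).curryLeft (X x)

/-- An abstract "differential calculus" on `M`, with all tangent spaces identified with `V`:
it records which functions/maps/forms/vector fields are smooth, the tangent maps of smooth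
self-maps, the exterior derivative, and the Lie bracket of vector fields, together with their
standard properties.  The axiom `apply_eq_of_d_ofFun_eq_zero` encodes connectedness of `M`. -/
structure DiffCalc (M V : Type*) [AddCommGroup V] [Module ℝ V] where
  SmoothFun : (M → ℝ) → Prop
  SmoothMap : (M → M) → Prop
  SmoothForm : ∀ {k : ℕ}, Form M V k → Prop
  SmoothVF : (M → V) → Prop
  Tmap : (M → M) → M → V →ₗ[ℝ] V
  d : ∀ {k : ℕ}, Form M V k → Form M V (k + 1)
  lieVF : (M → V) → (M → V) → (M → V)
  smoothMap_id : SmoothMap id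
  smoothMap_comp : ∀ {f g : M → M}, SmoothMap f → SmoothMap g → SmoothMap (f ∘ g)
  smoothFun_comp : ∀ {f : M → ℝ} {g : M → M}, SmoothFun f → SmoothMap g → SmoothFun (f ∘ g)
  smoothFun_const : ∀ c : ℝ, SmoothFun fun _ => c
  smoothForm_ofFun : ∀ {f : M → ℝ}, SmoothFun f → SmoothForm (ofFun f)
  smoothFun_of_ofFun : ∀ {f : M → ℝ}, SmoothForm (ofFun f) → SmoothFun f
  smoothForm_add : ∀ {k} {α β : Form M V k}, SmoothForm α → SmoothForm β → SmoothForm (α + β)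
  smoothForm_neg : ∀ {k} {α : Form M V k}, SmoothForm α → SmoothForm (-α)
  smoothForm_wedge : ∀ {p q} {α : Form M V p} {β : Form M V q},
    SmoothForm α → SmoothForm β → SmoothForm (wedge α β)
  smoothForm_d : ∀ {k} {α : Form M V k}, SmoothForm α → SmoothForm (d α)
  smoothForm_pull : ∀ {k} {α : Form M V k} {g : M → M}, SmoothMap g → SmoothForm α →
    SmoothForm fun x => (α (g x)).compLinearMap (Tmap g x)
  smoothVF_lie : ∀ {X Y : M → V}, SmoothVF X → SmoothVF Y → SmoothVF (lieVF X Y)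
  lieVF_antisymm : ∀ X Y : M → V, lieVF X Y = -lieVF Y X
  Tmap_id : ∀ x : M, Tmap id x = LinearMap.id
  Tmap_comp : ∀ {f g : M → M} (x : M), SmoothMap f → SmoothMap g →
    Tmap (f ∘ g) x = (Tmap f (g x)).comp (Tmap g x)
  d_add : ∀ {k} (α β : Form M V k), d (α + β) = d α + d β
  d_d : ∀ {k} (α : Form M V k), SmoothForm α → d (d α) = 0
  d_pull : ∀ {k} {g : M → M} (α : Form M V k), SmoothMap g → SmoothForm α →
    d (fun x => (α (g x)).compLinearMap (Tmap g x)) =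
      fun x => (d α (g x)).compLinearMap (Tmap g x)
  apply_eq_of_d_ofFun_eq_zero : ∀ {f : M → ℝ}, SmoothFun f → d (ofFun f) = 0 →
    ∀ x y : M, f x = f y

/-- Pullback of a `k`-form along a (smooth) map. -/
def DiffCalc.pull (F : DiffCalc M V) {k : ℕ} (g : M → M) (α : Form M V k) : Form M V k :=
  fun x => (α (g x)).compLinearMap (F.Tmap g x)

/-- The symplectomorphisms (diffeomorphisms preserving the `2`-form `ω`) of `M`. -/
def DiffCalc.IsSymplecto (F : DiffCalc M V) (ω : Form M V 2) (g : Equiv.Perm M) : Prop :=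
  F.SmoothMap g ∧ F.SmoothMap g.symm ∧ F.pull g ω = ω

/-- Pointwise nondegeneracy of a `2`-form. -/
def Nondegenerate (ω : Form M V 2) : Prop :=
  ∀ x : M, ∀ u : V, u ≠ 0 → ∃ v : V, ω x ![u, v] ≠ 0

/-- A `2`-form is symplectic if it is smooth, closed and nondegenerate. -/
def DiffCalc.IsSymplectic (F : DiffCalc M V) (ω : Form M V 2) : Prop :=
  F.SmoothForm ω ∧ F.d ω = 0 ∧ Nondegenerate ω

/-- `X` is a locally Hamiltonian vector field: `i_X ω` is closed. -/
def DiffCalc.IsLocHam (F : DiffCalc M V) (ω : Form M V 2) (X : M → V) : Prop :=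
  F.SmoothVF X ∧ F.SmoothForm (iprod ω X) ∧ F.d (iprod ω X) = 0

/-- `X` is a Hamiltonian vector field: `i_X ω` is exact. -/
def DiffCalc.IsHam (F : DiffCalc M V) (ω : Form M V 2) (X : M → V) : Prop :=
  F.SmoothVF X ∧ F.SmoothForm (iprod ω X) ∧
    ∃ f : M → ℝ, F.SmoothFun f ∧ F.d (ofFun f) = iprod ω X

/-- `H¹(M,ℝ) = 0`: every closed smooth `1`-form is the differential of a smooth function. -/
def DiffCalc.H1Trivial (F : DiffCalc M V) : Prop :=
  ∀ α : Form M V 1, F.SmoothForm α → F.d α = 0 →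
    ∃ f : M → ℝ, F.SmoothFun f ∧ F.d (ofFun f) = α

section Aux

variable (F : DiffCalc M V)

lemma ofFun_add' (f g : M → ℝ) : (ofFun (fun x => f x + g x) : Form M V 0) = ofFun f + ofFun g := by
  funext x; ext v; simp [ofFun]

lemma d_zero' {k : ℕ} : F.d (0 : Form M V k) = 0 := by
  have h := F.d_add (0 : Form M V k) 0
  rw [add_zero] at h
  exact add_left_cancel (h.symm.trans (add_zero _).symm)

lemma d_neg' {k : ℕ} (α : Form M V k) : F.d (-α) = -(F.d α) := by
  have h := F.d_add α (-α)
  rw [add_neg_cancel, d_zero'] at h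
  exact eq_neg_of_add_eq_zero_right h.symm

lemma d_sub' {k : ℕ} (α β : Form M V k) : F.d (α - β) = F.d α - F.d β := by
  rw [sub_eq_add_neg, F.d_add, d_neg', sub_eq_add_neg]

lemma smoothForm_sub' {k : ℕ} {α β : Form M V k} (hα : F.SmoothForm α) (hβ : F.SmoothForm β) :
    F.SmoothForm (α - β) := by
  rw [sub_eq_add_neg]
  exact F.smoothForm_add hα (F.smoothForm_neg hβ)

lemma ofFun_sub' (f g : M → ℝ) :
    (ofFun (fun x => f x - g x) : Form M V 0) = ofFun f + -(ofFun g) := by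
  funext x; ext v; simp [ofFun, sub_eq_add_neg]

lemma diff_eq' {f f' : M → ℝ} (hf : F.SmoothFun f) (hf' : F.SmoothFun f')
    (hd : F.d (ofFun f : Form M V 0) = F.d (ofFun f')) (x y : M) :
    f y - f x = f' y - f' x := by
  have heq : (ofFun (fun z => f z - f' z) : Form M V 0) = ofFun f + -(ofFun f') :=
    ofFun_sub' f f'
  have hsm : F.SmoothForm (ofFun (fun z => f z - f' z) : Form M V 0) := by
    rw [heq]
    exact F.smoothForm_add (F.smoothForm_ofFun hf) (F.smoothForm_neg (F.smoothForm_ofFun hf'))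
  have hsf : F.SmoothFun (fun z => f z - f' z) := F.smoothFun_of_ofFun hsm
  have hdz : F.d (ofFun (fun z => f z - f' z) : Form M V 0) = 0 := by
    rw [heq, F.d_add, d_neg', hd, add_neg_cancel]
  have h := F.apply_eq_of_d_ofFun_eq_zero hsf hdz x y
  linarith

lemma pull_ofFun' (g : M → M) (f : M → ℝ) :
    F.pull g (ofFun f : Form M V 0) = ofFun (fun x => f (g x)) := by
  funext x; ext v; simp [DiffCalc.pull, ofFun]

lemma pull_sub' {k : ℕ} (g : M → M) (α β : Form M V k) :
    F.pull g (α - β) = F.pull g α - F.pull g β := by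
  funext x; ext v; simp [DiffCalc.pull]

lemma pull_comp' {k : ℕ} {f g : M → M} (hf : F.SmoothMap f) (hg : F.SmoothMap g)
    (α : Form M V k) : F.pull (f ∘ g) α = F.pull g (F.pull f α) := by
  funext x
  simp only [DiffCalc.pull, Function.comp_apply, F.Tmap_comp x hf hg]
  ext v
  simp

lemma d_pull' {k : ℕ} {g : M → M} (hg : F.SmoothMap g) {α : Form M V k}
    (hα : F.SmoothForm α) : F.d (F.pull g α) = F.pull g (F.d α) :=
  F.d_pull α hg hα

lemma smoothFun_add' {f g : M → ℝ} (hf : F.SmoothFun f) (hg : F.SmoothFun g) :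
    F.SmoothFun (fun x => f x + g x) := by
  apply F.smoothFun_of_ofFun
  rw [ofFun_add']
  exact F.smoothForm_add (F.smoothForm_ofFun hf) (F.smoothForm_ofFun hg)

lemma symplecto_coe_mul (g₁ g₂ : Equiv.Perm M) : ⇑(g₁ * g₂) = ⇑g₁ ∘ ⇑g₂ := rfl

lemma symplecto_mul' {ω : Form M V 2} {g₁ g₂ : Equiv.Perm M}
    (h₁ : F.IsSymplecto ω g₁) (h₂ : F.IsSymplecto ω g₂) : F.IsSymplecto ω (g₁ * g₂) := by
  obtain ⟨hs₁, hs₁', hp₁⟩ := h₁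
  obtain ⟨hs₂, hs₂', hp₂⟩ := h₂
  refine ⟨?_, ?_, ?_⟩
  · rw [symplecto_coe_mul]
    exact F.smoothMap_comp hs₁ hs₂
  · have : ⇑(g₁ * g₂).symm = ⇑g₂.symm ∘ ⇑g₁.symm := by
      funext x; rfl
    rw [this]
    exact F.smoothMap_comp hs₂' hs₁'
  · rw [symplecto_coe_mul, pull_comp' F hs₁ hs₂, hp₁, hp₂]

end Aux

/-- Let `(M, ω)` be a non-compact (connected) symplectic manifold with
`H¹(M,ℝ) = 0` and exact symplectic form `ω`.  The cohomology class in `H²(Diff(M,ω), ℝ)` of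
the `2`-cocycle `C_{x₀}(g₁,g₂) = ∫_{x₀}^{g₂x₀}(g₁*ω₁ − ω₁)` does not depend on the base point
`x₀` nor on the choice of the primitive `ω₁` of `ω`.

Explicitly: (1) for two base points `x₁, x₂` one has `C_{x₁} − C_{x₂} = D a`, where `a` is the
`1`-cochain `a(g) = ∫_{x₁}^{x₂}(g*ω₁ − ω₁)` and `(D a)(g₁,g₂) = a(g₂) − a(g₁g₂) + a(g₁)`;
(2) for a second primitive `ω₁'` of `ω` the corresponding cocycle differs from `C_{x₁}` by the
coboundary of some `1`-cochain.  All line integrals of the exact forms `g*ω₁ − ω₁` are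
expressed via primitives (path independence). -/
theorem cocycle_class_independent
    {M V : Type*} [AddCommGroup V] [Module ℝ V]
    [TopologicalSpace M] [NoncompactSpace M]
    (F : DiffCalc M V)
    (ω : Form M V 2) (hω : F.SmoothForm ω) (hnd : Nondegenerate ω)
    (ω₁ : Form M V 1) (hω₁ : F.SmoothForm ω₁) (hdω₁ : F.d ω₁ = ω)
    (ω₁' : Form M V 1) (hω₁' : F.SmoothForm ω₁') (hdω₁' : F.d ω₁' = ω)
    (hH1 : F.H1Trivial)
    (x₁ x₂ : M)
    -- `C₁` is the cocycle based at `x₁`, `C₂` the one based at `x₂`, both built from `ω₁`;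
    -- `C'` is the cocycle based at `x₁` built from the other primitive `ω₁'`.
    (C₁ C₂ C' : Equiv.Perm M → Equiv.Perm M → ℝ)
    (hC₁ : ∀ g₁ ∈ {g | F.IsSymplecto ω g}, ∀ g₂ ∈ {g | F.IsSymplecto ω g},
      ∃ f : M → ℝ, F.SmoothFun f ∧ F.d (ofFun f) = F.pull g₁ ω₁ - ω₁ ∧
        C₁ g₁ g₂ = f (g₂ x₁) - f x₁)
    (hC₂ : ∀ g₁ ∈ {g | F.IsSymplecto ω g}, ∀ g₂ ∈ {g | F.IsSymplecto ω g},
      ∃ f : M → ℝ, F.SmoothFun f ∧ F.d (ofFun f) = F.pull g₁ ω₁ - ω₁ ∧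
        C₂ g₁ g₂ = f (g₂ x₂) - f x₂)
    (hC' : ∀ g₁ ∈ {g | F.IsSymplecto ω g}, ∀ g₂ ∈ {g | F.IsSymplecto ω g},
      ∃ f : M → ℝ, F.SmoothFun f ∧ F.d (ofFun f) = F.pull g₁ ω₁' - ω₁' ∧
        C' g₁ g₂ = f (g₂ x₁) - f x₁)
    -- the `1`-cochain `a(g) = ∫_{x₁}^{x₂} (g*ω₁ − ω₁)`
    (a : Equiv.Perm M → ℝ)
    (ha : ∀ g ∈ {g | F.IsSymplecto ω g},
      ∃ f : M → ℝ, F.SmoothFun f ∧ F.d (ofFun f) = F.pull g ω₁ - ω₁ ∧ a g = f x₂ - f x₁) :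
    (∀ g₁ ∈ {g | F.IsSymplecto ω g}, ∀ g₂ ∈ {g | F.IsSymplecto ω g},
        C₁ g₁ g₂ - C₂ g₁ g₂ = a g₂ - a (g₁ * g₂) + a g₁) ∧
      (∃ b : Equiv.Perm M → ℝ, ∀ g₁ ∈ {g | F.IsSymplecto ω g}, ∀ g₂ ∈ {g | F.IsSymplecto ω g},
        C₁ g₁ g₂ - C' g₁ g₂ = b g₂ - b (g₁ * g₂) + b g₁) := by
  constructor
  · intro g₁ hg₁ g₂ hg₂
    obtain ⟨fA, hfA, hdA, hCA⟩ := hC₁ g₁ hg₁ g₂ hg₂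
    obtain ⟨fB, hfB, hdB, hCB⟩ := hC₂ g₁ hg₁ g₂ hg₂
    obtain ⟨f₁, hf₁, hd₁, ha₁⟩ := ha g₁ hg₁
    obtain ⟨f₂, hf₂, hd₂, ha₂⟩ := ha g₂ hg₂
    obtain ⟨f₃, hf₃, hd₃, ha₃⟩ := ha (g₁ * g₂) (symplecto_mul' F hg₁ hg₂)
    have e1 : fA (g₂ x₁) - fA x₁ = f₁ (g₂ x₁) - f₁ x₁ :=
      diff_eq' F hfA hf₁ (hdA.trans hd₁.symm) x₁ (g₂ x₁)
    have e2 : fB (g₂ x₂) - fB x₂ = f₁ (g₂ x₂) - f₁ x₂ :=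
      diff_eq' F hfB hf₁ (hdB.trans hd₁.symm) x₂ (g₂ x₂)
    have hfc : F.SmoothFun (fun x => f₁ (g₂ x) + f₂ x) :=
      smoothFun_add' F (F.smoothFun_comp hf₁ hg₂.1) hf₂
    have hdc : F.d (ofFun (fun x => f₁ (g₂ x) + f₂ x) : Form M V 0) = F.d (ofFun f₃) := by
      rw [ofFun_add', F.d_add, ← pull_ofFun' F ⇑g₂ f₁, d_pull' F hg₂.1 (F.smoothForm_ofFun hf₁),
        hd₁, hd₂, hd₃, pull_sub', symplecto_coe_mul, pull_comp' F hg₁.1 hg₂.1]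
      abel
    have e3 : (f₁ (g₂ x₂) + f₂ x₂) - (f₁ (g₂ x₁) + f₂ x₁) = f₃ x₂ - f₃ x₁ :=
      diff_eq' F hfc hf₃ hdc x₁ x₂
    linarith [hCA, hCB, ha₁, ha₂, ha₃]
  · have hcl : F.d (ω₁ - ω₁') = 0 := by rw [d_sub', hdω₁, hdω₁', sub_self]
    obtain ⟨h, hhs, hdh⟩ := hH1 (ω₁ - ω₁') (smoothForm_sub' F hω₁ hω₁') hcl
    refine ⟨fun g => h x₁ - h (g x₁), ?_⟩
    intro g₁ hg₁ g₂ hg₂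
    obtain ⟨fA, hfA, hdA, hCA⟩ := hC₁ g₁ hg₁ g₂ hg₂
    obtain ⟨fP, hfP, hdP, hCP⟩ := hC' g₁ hg₁ g₂ hg₂
    have hfc : F.SmoothFun (fun x => fP x + (h (g₁ x) - h x)) :=
      smoothFun_add' F hfP (F.smoothFun_of_ofFun (by
        rw [ofFun_sub' (fun x => h (g₁ x)) h]
        exact F.smoothForm_add
          (F.smoothForm_ofFun (F.smoothFun_comp hhs hg₁.1))
          (F.smoothForm_neg (F.smoothForm_ofFun hhs))))
    have hdc : F.d (ofFun (fun x => fP x + (h (g₁ x) - h x)) : Form M V 0) =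
        F.d (ofFun fA) := by
      rw [ofFun_add' fP (fun x => h (g₁ x) - h x), F.d_add,
        ofFun_sub' (fun x => h (g₁ x)) h, F.d_add, d_neg',
        ← pull_ofFun' F ⇑g₁ h, d_pull' F hg₁.1 (F.smoothForm_ofFun hhs),
        hdh, hdP, hdA, pull_sub']
      abel
    have e : fA (g₂ x₁) - fA x₁ =
        (fP (g₂ x₁) + (h (g₁ (g₂ x₁)) - h (g₂ x₁))) - (fP x₁ + (h (g₁ x₁) - h x₁)) :=
      (diff_eq' F hfc hfA hdc x₁ (g₂ x₁)).symm
    have hm : (g₁ * g₂) x₁ = g₁ (g₂ x₁) := rfl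
    simp only [hm]
    linarith [e]

end SymplCocycle
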